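/- Let K be a field of characteristic p > 0, let q be a power of p, and let a(n) = Σ_{i=1}^d β_i α_i^n with α_i, β_i in an algebraic closure of K. Suppose c_0, c_1, ..., c_r ∈ ℤ are such that the element Σ_{i=1}^d (β_i α_i^{c_0}) ⊗ α_i^{c_1} ⊗ ... ⊗ α_i^{c_r} of the (r+1)-fold tensor power of K̄ over 𝔽_q vanishes. Then a(c_0 + c_1 q^{k_1} + ... + c_r q^{k_r}) = 0 for all k_1,...,k_r ∈ ℕ (whenever the argument is a nonnegative integer). -/

import Mathlib

open scoped TensorProduct

lemma prod_zpow_eq_zpow_sum {G : Type*} [CommGroupWithZero G] {a : G} (ha : a ≠ 0)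
    {ι : Type*} (s : Finset ι) (f : ι → ℤ) :
    ∏ j ∈ s, a ^ f j = a ^ (∑ j ∈ s, f j) := by
  classical
  induction s using Finset.induction with
  | empty => simp
  | insert _ _ hx ih =>
    rw [Finset.prod_insert hx, Finset.sum_insert hx, zpow_add₀ ha, ih]

/-- If the tensor `Σ_i (β_i α_i^{c_0}) ⊗ α_i^{c_1} ⊗ ... ⊗ α_i^{c_r}` vanishes in the
`(r+1)`-fold tensor power of the algebraic closure of `K` over `𝔽_q` (`q = p^e`), then
`a(c_0 + c_1 q^{k_1} + ... + c_r q^{k_r}) = 0` for all `k_1,...,k_r ∈ ℕ` whenever this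
argument is a nonnegative integer, where `a(n) = Σ_i β_i α_i^n`. -/
theorem zeroes_from_tensor_vanishing
    (K : Type) [Field K] (p : ℕ) [Fact p.Prime] [CharP K p] (e : ℕ) (he : 0 < e)
    (q : ℕ) (hq : q = p ^ e)
    [Algebra (GaloisField p e) (AlgebraicClosure K)]
    (d r : ℕ)
    (α β : Fin d → AlgebraicClosure K) (hα : ∀ i, α i ≠ 0)
    (c : Fin (r + 1) → ℤ)
    (htensor :
      (∑ i : Fin d,
        PiTensorProduct.tprod (GaloisField p e)
          (fun j : Fin (r + 1) =>
            if j = 0 then β i * α i ^ c 0 else α i ^ c j) :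
        PiTensorProduct (GaloisField p e) (fun _ : Fin (r + 1) => AlgebraicClosure K)) = 0) :
    ∀ (k : Fin r → ℕ) (N : ℕ),
      (N : ℤ) = c 0 + ∑ j : Fin r, c j.succ * (q : ℤ) ^ k j →
      ∑ i : Fin d, β i * α i ^ N = 0 := by
  intro k N hN
  haveI : Fintype (GaloisField p e) := Fintype.ofFinite _
  have hcard : Fintype.card (GaloisField p e) = q := by
    rw [hq, ← Nat.card_eq_fintype_card]; exact GaloisField.card p e he.ne'
  -- Frobenius power as a `GaloisField p e`-linear map
  let pw : ℕ → (AlgebraicClosure K →ₗ[GaloisField p e] AlgebraicClosure K) := fun m =>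
    { toFun := fun x => x ^ q ^ m
      map_add' := fun x y => by
        simp only [hq, ← pow_mul]
        exact add_pow_char_pow x y p (e * m)
      map_smul' := fun cc x => by
        simp only [Algebra.smul_def, mul_pow, RingHom.id_apply]
        congr 1
        rw [← map_pow]
        congr 1
        rw [← hcard]
        exact FiniteField.pow_card_pow _ _ }
  let f : (j : Fin (r + 1)) → (AlgebraicClosure K →ₗ[GaloisField p e] AlgebraicClosure K) :=
    Fin.cases LinearMap.id (fun j => pw (k j))
  let M : MultilinearMap (GaloisField p e) (fun _ : Fin (r + 1) => AlgebraicClosure K)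
      (AlgebraicClosure K) :=
    (MultilinearMap.mkPiAlgebra (GaloisField p e) (Fin (r + 1))
      (AlgebraicClosure K)).compLinearMap f
  have h0 := congrArg (PiTensorProduct.lift M) htensor
  simp only [map_sum, map_zero, PiTensorProduct.lift.tprod] at h0
  rw [← h0]
  refine Finset.sum_congr rfl fun i _ => ?_
  have hαi := hα i
  simp only [M, MultilinearMap.compLinearMap_apply, MultilinearMap.mkPiAlgebra_apply]
  rw [Fin.prod_univ_succ]
  simp only [f, Fin.cases_zero, Fin.cases_succ, LinearMap.id_coe, id_eq, if_pos rfl,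
    Fin.succ_ne_zero, if_false, LinearMap.coe_mk, AddHom.coe_mk, pw]
  have hstep : ∀ j : Fin r, (α i ^ c j.succ) ^ q ^ k j
      = α i ^ (c j.succ * (q : ℤ) ^ k j) := by
    intro j
    rw [← zpow_natCast (α i ^ c j.succ) (q ^ k j), ← zpow_mul]
    push_cast
    ring_nf
  calc β i * α i ^ N = β i * α i ^ ((N : ℤ)) := by rw [zpow_natCast]
    _ = β i * α i ^ c 0 * ∏ j : Fin r, (α i ^ c j.succ) ^ q ^ k j := by
        rw [hN, zpow_add₀ hαi, ← mul_assoc]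
        congr 1
        rw [← prod_zpow_eq_zpow_sum hαi]
        exact Finset.prod_congr rfl fun j _ => (hstep j).symm
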